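/- arXiv:math/0101257 — 3 statements merged into one kernel-verified Lean document; each statement's English description precedes it below -/
import Mathlib

section
/- Let V : L²(π) → [0,∞] satisfy V(P_t f) ≤ V(f) for all t ≥ 0, and suppose the Liggett–Stroock inequality Var(f) ≤ C·D(f)^{1/p}·V(f)^{1/q} holds with 1/p + 1/q = 1, p > 1, for all f ∈ L²(π). Then Var(P_t f) ≤ C'·V(f)/t^{q−1} for all t > 0, for some constant C' depending only on C, p, q. -/
/- STATEMENT 2: the Liggett–Stroock inequality Var(f) ≤ C D(f)^{1/p} V(f)^{1/q}
implies algebraic L² decay Var(P_t f) ≤ C' V(f)/t^{q-1}. -/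
theorem stmt_2 {α : Type*} (P : ℝ → α → α) (Var D V : α → ℝ)
    (C p q : ℝ) (hC : 0 < C) (hp : 1 < p) (hpq : 1 / p + 1 / q = 1)
    (hDnonneg : ∀ f, 0 ≤ D f) (hVnonneg : ∀ f, 0 ≤ V f)
    (hVarnonneg : ∀ f, 0 ≤ Var f)
    (hVmono : ∀ f, ∀ t, 0 ≤ t → V (P t f) ≤ V f)
    (hsemigroup : ∀ s t, 0 ≤ s → 0 ≤ t → ∀ f, P (s + t) f = P s (P t f))
    (hP0 : ∀ f, P 0 f = f)
    (hderiv : ∀ f, ∀ t, 0 ≤ t →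
      HasDerivAt (fun s => Var (P s f)) (-2 * D (P t f)) t)
    (hLS : ∀ f, Var f ≤ C * (D f) ^ (1 / p) * (V f) ^ (1 / q)) :
    ∃ C' : ℝ, 0 < C' ∧ ∀ f, ∀ t : ℝ, 0 < t →
      Var (P t f) ≤ C' * V f / t ^ (q - 1) := by
  have hp0 : (0:ℝ) < p := lt_trans one_pos hp
  have hq_pos : (0:ℝ) < q := by
    have h1 : 1 / p < 1 := by rw [div_lt_one hp0]; exact hp
    have h2 : 0 < 1 / q := by linarith
    exact (one_div_pos).1 h2
  have key : p + q = p * q := by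
    field_simp at hpq
    linarith
  have hq1 : 1 < q := by nlinarith [key, hp, hq_pos]
  have hpq1 : (p - 1) * (q - 1) = 1 := by linear_combination -key
  have hpq2 : p * (q - 1) = q := by linear_combination -key
  have hq1' : (0:ℝ) < q - 1 := by linarith
  have hp1' : (0:ℝ) < p - 1 := by linarith
  refine ⟨C ^ q / (2 * (p - 1)) ^ (q - 1), by positivity, ?_⟩
  intro f t ht
  by_cases hu : Var (P t f) ≤ 0
  · have hrhs : 0 ≤ C ^ q / (2 * (p - 1)) ^ (q - 1) * V f / t ^ (q - 1) := by
      have := hVnonneg f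
      positivity
    linarith
  push_neg at hu
  set u : ℝ → ℝ := fun s => Var (P s f) with hudef
  -- u is antitone on [0, t]
  have hanti : AntitoneOn u (Set.Icc 0 t) := by
    apply antitoneOn_of_deriv_nonpos (convex_Icc 0 t)
    · exact fun s hs => (hderiv f s hs.1).continuousAt.continuousWithinAt
    · rw [interior_Icc]
      exact fun s hs => (hderiv f s hs.1.le).differentiableAt.differentiableWithinAt
    · rw [interior_Icc]
      intro s hs
      rw [(hderiv f s hs.1.le).deriv]
      have := hDnonneg (P s f)
      linarith
  have htmem : t ∈ Set.Icc (0:ℝ) t := ⟨ht.le, le_refl t⟩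
  have hupos : ∀ s ∈ Set.Icc (0:ℝ) t, 0 < u s := fun s hs =>
    lt_of_lt_of_le hu (hanti hs htmem hs.2)
  -- V f is positive
  have hVf : 0 < V f := by
    rcases lt_or_eq_of_le (hVnonneg f) with h | h
    · exact h
    · exfalso
      have hV' : V (P t f) = 0 :=
        le_antisymm (by rw [h]; exact hVmono f t ht.le) (hVnonneg _)
      have := hLS (P t f)
      rw [hV', Real.zero_rpow (by positivity : (1:ℝ)/q ≠ 0), mul_zero] at this
      linarith
  set K : ℝ := (C * V f ^ (1 / q)) ^ p with hKdef
  have hK : 0 < K := by positivity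
  set c : ℝ := 2 * (p - 1) / K with hcdef
  have hc : 0 < c := by positivity
  -- differential inequality: D (P s f) ≥ u s ^ p / K
  have hD : ∀ s ∈ Set.Icc (0:ℝ) t, u s ^ p / K ≤ D (P s f) := by
    intro s hs
    have hV' : V (P s f) ^ (1 / q) ≤ V f ^ (1 / q) :=
      Real.rpow_le_rpow (hVnonneg _) (hVmono f s hs.1) (by positivity)
    have h1 : u s ≤ C * D (P s f) ^ (1 / p) * V f ^ (1 / q) := by
      refine le_trans (hLS (P s f)) ?_
      have hCD : 0 ≤ C * D (P s f) ^ (1 / p) :=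
        mul_nonneg hC.le (Real.rpow_nonneg (hDnonneg _) _)
      exact mul_le_mul_of_nonneg_left hV' hCD
    have h2 : u s / (C * V f ^ (1 / q)) ≤ D (P s f) ^ (1 / p) := by
      rw [div_le_iff₀ (by positivity)]
      calc u s ≤ C * D (P s f) ^ (1 / p) * V f ^ (1 / q) := h1
        _ = D (P s f) ^ (1 / p) * (C * V f ^ (1 / q)) := by ring
    have h3 : (u s / (C * V f ^ (1 / q))) ^ p ≤ (D (P s f) ^ (1 / p)) ^ p :=
      Real.rpow_le_rpow (div_nonneg (hVarnonneg _) (by positivity)) h2 hp0.le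
    have h4 : (D (P s f) ^ (1 / p)) ^ p = D (P s f) := by
      rw [← Real.rpow_mul (hDnonneg _), one_div, inv_mul_cancel₀ hp0.ne', Real.rpow_one]
    have h5 : (u s / (C * V f ^ (1 / q))) ^ p = u s ^ p / K := by
      rw [Real.div_rpow (hVarnonneg _) (by positivity)]
    rw [h5, h4] at h3
    exact h3
  -- the function w s = u s ^ (1 - p) - c * s is monotone on [0, t]
  set w : ℝ → ℝ := fun s => u s ^ (1 - p) - c * s with hwdef
  have hwderiv : ∀ s ∈ Set.Icc (0:ℝ) t,
      HasDerivAt w ((-2 * D (P s f)) * (1 - p) * u s ^ (1 - p - 1) - c) s := by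
    intro s hs
    have hlin : HasDerivAt (fun r : ℝ => c * r) c s := by
      simpa using (hasDerivAt_id s).const_mul c
    exact ((hderiv f s hs.1).rpow_const (Or.inl (hupos s hs).ne')).sub hlin
  have hwmono : MonotoneOn w (Set.Icc 0 t) := by
    apply monotoneOn_of_deriv_nonneg (convex_Icc 0 t)
    · exact fun s hs => (hwderiv s hs).continuousAt.continuousWithinAt
    · rw [interior_Icc]
      exact fun s hs => (hwderiv s (Set.mem_Icc_of_Ioo hs)).differentiableAt.differentiableWithinAt
    · rw [interior_Icc]
      intro s hs
      have hs' : s ∈ Set.Icc (0:ℝ) t := Set.mem_Icc_of_Ioo hs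
      rw [(hwderiv s hs').deriv]
      -- show 0 ≤ (-2 D)(1-p) u^{-p} - c
      have hus : 0 < u s := hupos s hs'
      have husp : 0 < u s ^ p := Real.rpow_pos_of_pos hus p
      have hexp : u s ^ (1 - p - 1) = (u s ^ p)⁻¹ := by
        rw [show (1 - p - 1) = -p by ring, Real.rpow_neg hus.le]
      have hDs : u s ^ p / K ≤ D (P s f) := hD s hs'
      have h6 : (u s ^ p)⁻¹ * (u s ^ p / K) ≤ (u s ^ p)⁻¹ * D (P s f) :=
        mul_le_mul_of_nonneg_left hDs (by positivity)
      have h7 : (u s ^ p)⁻¹ * (u s ^ p / K) = 1 / K := by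
        field_simp
      rw [h7] at h6
      have h8 : c = 2 * (p - 1) * (1 / K) := by rw [hcdef]; ring
      have h9 : c ≤ 2 * (p - 1) * ((u s ^ p)⁻¹ * D (P s f)) := by
        rw [h8]
        exact mul_le_mul_of_nonneg_left h6 (by positivity)
      have : (-2 * D (P s f)) * (1 - p) * u s ^ (1 - p - 1)
          = 2 * (p - 1) * ((u s ^ p)⁻¹ * D (P s f)) := by
        rw [hexp]; ring
      linarith [h9, this ▸ le_refl ((-2 * D (P s f)) * (1 - p) * u s ^ (1 - p - 1))]
  have h0mem : (0:ℝ) ∈ Set.Icc (0:ℝ) t := ⟨le_refl 0, ht.le⟩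
  have hw0t : w 0 ≤ w t := hwmono h0mem htmem ht.le
  have hw0 : 0 ≤ u 0 ^ (1 - p) := Real.rpow_nonneg (hVarnonneg _) _
  have hct : c * t ≤ u t ^ (1 - p) := by
    have : w 0 = u 0 ^ (1 - p) - c * 0 := rfl
    have h' : w t = u t ^ (1 - p) - c * t := rfl
    rw [this, h'] at hw0t
    linarith
  -- invert
  have hut : 0 < u t := hupos t htmem
  have hctpos : 0 < c * t := by positivity
  have hinv : (u t ^ (1 - p)) ^ (-(q - 1)) ≤ (c * t) ^ (-(q - 1)) :=
    Real.rpow_le_rpow_of_nonpos hctpos hct (by linarith)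
  have hleft : (u t ^ (1 - p)) ^ (-(q - 1)) = u t := by
    rw [← Real.rpow_mul hut.le]
    have : (1 - p) * -(q - 1) = 1 := by linear_combination hpq1
    rw [this, Real.rpow_one]
  have hright : (c * t) ^ (-(q - 1)) = C ^ q / (2 * (p - 1)) ^ (q - 1) * V f / t ^ (q - 1) := by
    rw [Real.rpow_neg hctpos.le]
    have hKq : K ^ (q - 1) = C ^ q * V f := by
      rw [hKdef, ← Real.rpow_mul (mul_nonneg hC.le (Real.rpow_nonneg (hVnonneg f) _)), hpq2,
        Real.mul_rpow hC.le (Real.rpow_nonneg (hVnonneg f) _), ← Real.rpow_mul (hVnonneg f),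
        one_div, inv_mul_cancel₀ hq_pos.ne', Real.rpow_one]
    have hmul : (c * t) ^ (q - 1) = c ^ (q - 1) * t ^ (q - 1) :=
      Real.mul_rpow hc.le ht.le
    have hcq : c ^ (q - 1) = (2 * (p - 1)) ^ (q - 1) / (C ^ q * V f) := by
      rw [hcdef, Real.div_rpow (by positivity) hK.le, hKq]
    rw [hmul, hcq]
    rw [eq_div_iff (by positivity)]
    field_simp
  rw [hleft, hright] at hinv
  exact hinv
end

section
/- For a reversible Markov chain with bounded jump rates (M = sup_x q(x) < ∞), the spectral gap λ₁ := inf{D(f) : π(f)=0, ‖f‖₂=1} satisfies λ₁ ≥ k²/(2M), where k = inf over sets A with π(A) ∈ (0,1) of [∫_A π(dx) q(x,Aᶜ)] / [π(A) ∧ π(Aᶜ)]. -/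
open Finset

lemma exists_median {E : Type*} [Fintype E] [DecidableEq E] [Nonempty E]
    (π : E → ℝ) (hπpos : ∀ i, 0 < π i) (hπ1 : ∑ i, π i = 1) (f : E → ℝ) :
    ∃ c : ℝ, (∑ i ∈ univ.filter (fun i => c < f i), π i ≤ 1/2) ∧
      (∑ i ∈ univ.filter (fun i => f i < c), π i ≤ 1/2) := by
  classical
  set T : Finset ℝ := univ.image f with hT
  have hTne : T.Nonempty := (univ_nonempty).image f
  set B : Finset ℝ := T.filter (fun t => 1/2 ≤ ∑ i ∈ univ.filter (fun i => f i ≤ t), π i) with hBdef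
  have hBne : B.Nonempty := by
    refine ⟨T.max' hTne, ?_⟩
    rw [hBdef, mem_filter]
    refine ⟨T.max'_mem hTne, ?_⟩
    have : univ.filter (fun i => f i ≤ T.max' hTne) = univ := by
      apply filter_true_of_mem
      intro i _
      exact T.le_max' (f i) (mem_image_of_mem f (mem_univ i))
    rw [this, hπ1]; norm_num
  set c := B.min' hBne with hc
  have hcB : c ∈ B := B.min'_mem hBne
  rw [hBdef, mem_filter] at hcB
  have hle : 1/2 ≤ ∑ i ∈ univ.filter (fun i => f i ≤ c), π i := hcB.2
  have hsplit : ∑ i ∈ univ.filter (fun i => f i ≤ c), π i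
      + ∑ i ∈ univ.filter (fun i => ¬ f i ≤ c), π i = 1 := by
    rw [sum_filter_add_sum_filter_not, hπ1]
  refine ⟨c, ?_, ?_⟩
  · have : univ.filter (fun i => c < f i) = univ.filter (fun i => ¬ f i ≤ c) := by
      apply filter_congr; intro i _; simp [not_le]
    rw [this]; linarith
  · by_contra hcon
    push_neg at hcon
    set S := univ.filter (fun i => f i < c) with hS
    have hSne : S.Nonempty := by
      rw [nonempty_iff_ne_empty]
      intro h
      rw [h, sum_empty] at hcon
      linarith
    set t' := S.sup' hSne f with ht'
    have ht'lt : t' < c := by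
      rw [ht', Finset.sup'_lt_iff]
      intro i hi
      exact (mem_filter.mp hi).2
    have ht'T : t' ∈ T := by
      obtain ⟨i, hi, hie⟩ := Finset.exists_mem_eq_sup' hSne f
      rw [ht', hie]
      exact mem_image_of_mem f (mem_univ i)
    have hsub : S ⊆ univ.filter (fun i => f i ≤ t') := by
      intro i hi
      rw [mem_filter]
      exact ⟨mem_univ i, Finset.le_sup' f hi⟩
    have hmono : ∑ i ∈ S, π i ≤ ∑ i ∈ univ.filter (fun i => f i ≤ t'), π i :=
      sum_le_sum_of_subset_of_nonneg hsub (fun i _ _ => (hπpos i).le)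
    have ht'B : t' ∈ B := by
      rw [hBdef, mem_filter]
      exact ⟨ht'T, by linarith⟩
    exact absurd (B.min'_le t' ht'B) (by rw [← hc]; linarith)

lemma coarea {E : Type*} [Fintype E] [DecidableEq E]
    (π : E → ℝ) (hπpos : ∀ i, 0 < π i)
    (J : E → E → ℝ) (hJ : ∀ i j, 0 ≤ J i j)
    (k : ℝ) (hk0 : 0 ≤ k)
    (hkA : ∀ A : Finset E, A.Nonempty → (∑ i ∈ A, π i) ≤ 1/2 →
      2 * k * (∑ i ∈ A, π i) ≤ (∑ i ∈ A, ∑ j ∈ Aᶜ, J i j) + ∑ i ∈ Aᶜ, ∑ j ∈ A, J i j) :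
    ∀ v : E → ℝ, (∀ i, 0 ≤ v i) →
      (∑ i ∈ univ.filter (fun i => 0 < v i), π i ≤ 1/2) →
      2 * k * ∑ i, π i * v i ≤ ∑ i, ∑ j, J i j * |v j - v i| := by
  classical
  suffices H : ∀ n : ℕ, ∀ v : E → ℝ, (univ.filter (fun i => 0 < v i)).card = n →
      (∀ i, 0 ≤ v i) → (∑ i ∈ univ.filter (fun i => 0 < v i), π i ≤ 1/2) →
      2 * k * ∑ i, π i * v i ≤ ∑ i, ∑ j, J i j * |v j - v i| by
    intro v hv hs
    exact H _ v rfl hv hs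
  intro n
  induction n using Nat.strong_induction_on with
  | _ n IH =>
    intro v hcard hv hsupp
    set A := univ.filter (fun i => 0 < v i) with hA
    by_cases hAne : A.Nonempty
    case neg =>
      have hvz : ∀ i, v i = 0 := by
        intro i
        by_contra h
        exact hAne ⟨i, by rw [hA, mem_filter]; exact ⟨mem_univ i, lt_of_le_of_ne (hv i) (Ne.symm h)⟩⟩
      simp [hvz]
    case pos =>
    set a := A.inf' hAne v with ha
    have hmemA : ∀ i, i ∈ A ↔ 0 < v i := by
      intro i; rw [hA, mem_filter]; simp
    have hapos : 0 < a := by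
      rw [ha, Finset.lt_inf'_iff]
      intro i hi; exact (hmemA i).mp hi
    have halev : ∀ i ∈ A, a ≤ v i := fun i hi => Finset.inf'_le v hi
    obtain ⟨i₀, hi₀A, hi₀⟩ := Finset.exists_mem_eq_inf' hAne v
    set v' : E → ℝ := fun i => if 0 < v i then v i - a else 0 with hv'def
    have hv' : ∀ i, 0 ≤ v' i := by
      intro i
      rw [hv'def]
      by_cases h : 0 < v i
      · simp only [h, if_true]
        have := halev i ((hmemA i).mpr h)
        linarith
      · simp [h]
    have hvz : ∀ i, ¬ 0 < v i → v i = 0 := fun i h => le_antisymm (not_lt.mp h) (hv i)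
    set χ : E → ℝ := fun i => if 0 < v i then 1 else 0 with hχdef
    -- pointwise decomposition of |v j - v i|
    have habs : ∀ i j, |v j - v i| = |v' j - v' i| + a * |χ j - χ i| := by
      intro i j
      by_cases hi : 0 < v i <;> by_cases hj : 0 < v j <;>
        simp only [hv'def, hχdef, hi, hj, if_true, if_false]
      · simp
      · have hvi := halev i ((hmemA i).mpr hi)
        rw [hvz j hj]
        rw [abs_of_nonpos (by linarith), abs_of_nonpos (by linarith),
          abs_of_nonpos (by norm_num)]
        ring
      · have hvj := halev j ((hmemA j).mpr hj)
        rw [hvz i hi]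
        rw [abs_of_nonneg (by linarith), abs_of_nonneg (by linarith),
          abs_of_nonneg (by norm_num)]
        ring
      · rw [hvz i hi, hvz j hj]; simp
    -- support of v' is strictly smaller
    set A' := univ.filter (fun i => 0 < v' i) with hA'
    have hsub : A' ⊆ A := by
      intro i hi
      rw [hA', mem_filter] at hi
      rw [hmemA]
      by_contra h
      rw [hv'def] at hi
      simp only [h, if_false] at hi
      exact lt_irrefl 0 hi.2
    have hi₀notA' : i₀ ∉ A' := by
      rw [hA', mem_filter, hv'def]
      simp only [(hmemA i₀).mp hi₀A, if_true]
      rw [← hi₀, ← ha]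
      simp
    have hcard' : A'.card < n := by
      rw [← hcard]
      exact Finset.card_lt_card (Finset.ssubset_iff_of_subset hsub |>.mpr ⟨i₀, hi₀A, hi₀notA'⟩)
    have hsupp' : ∑ i ∈ A', π i ≤ 1/2 :=
      le_trans (sum_le_sum_of_subset_of_nonneg hsub (fun i _ _ => (hπpos i).le)) hsupp
    have hIH := IH A'.card hcard' v' rfl hv' hsupp'
    -- sum decomposition
    have hsum_v : ∑ i, π i * v i = (∑ i, π i * v' i) + a * ∑ i ∈ A, π i := by
      have h1 : ∀ i, π i * v i = π i * v' i + a * (π i * χ i) := by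
        intro i
        by_cases h : 0 < v i <;>
          simp only [hv'def, hχdef, h, if_true, if_false]
        · ring
        · rw [hvz i h]; ring
      have h2 : ∑ i ∈ A, π i = ∑ i, π i * χ i := by
        rw [hA, Finset.sum_filter]
        apply Finset.sum_congr rfl
        intro i _
        by_cases h : 0 < v i <;> simp [hχdef, h]
      calc ∑ i, π i * v i = ∑ i, (π i * v' i + a * (π i * χ i)) :=
            sum_congr rfl (fun i _ => h1 i)
        _ = (∑ i, π i * v' i) + a * ∑ i, π i * χ i := by
            rw [sum_add_distrib, mul_sum]
        _ = _ := by rw [h2]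
    have hsum_r : ∑ i, ∑ j, J i j * |v j - v i|
        = (∑ i, ∑ j, J i j * |v' j - v' i|) + a * ∑ i, ∑ j, J i j * |χ j - χ i| := by
      rw [Finset.mul_sum, ← Finset.sum_add_distrib]
      apply sum_congr rfl; intro i _
      rw [Finset.mul_sum, ← Finset.sum_add_distrib]
      apply sum_congr rfl; intro j _
      rw [habs i j]; ring
    have hind : ∑ i, ∑ j, J i j * |χ j - χ i|
        = (∑ i ∈ A, ∑ j ∈ Aᶜ, J i j) + ∑ i ∈ Aᶜ, ∑ j ∈ A, J i j := by
      rw [← Finset.sum_add_sum_compl A (fun i => ∑ j, J i j * |χ j - χ i|)]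
      congr 1
      · apply sum_congr rfl; intro i hi
        have hvi : 0 < v i := (hmemA i).mp hi
        rw [← Finset.sum_add_sum_compl A (fun j => J i j * |χ j - χ i|)]
        have hzero : ∑ j ∈ A, J i j * |χ j - χ i| = 0 := by
          apply sum_eq_zero
          intro j hj
          have hvj : 0 < v j := (hmemA j).mp hj
          simp [hχdef, hvi, hvj]
        rw [hzero, zero_add]
        apply sum_congr rfl; intro j hj
        have hvj : ¬ 0 < v j := fun h => (mem_compl.mp hj) ((hmemA j).mpr h)
        simp [hχdef, hvi, hvj]
      · apply sum_congr rfl; intro i hi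
        have hvi : ¬ 0 < v i := fun h => (mem_compl.mp hi) ((hmemA i).mpr h)
        rw [← Finset.sum_add_sum_compl A (fun j => J i j * |χ j - χ i|)]
        have hzero : ∑ j ∈ Aᶜ, J i j * |χ j - χ i| = 0 := by
          apply sum_eq_zero
          intro j hj
          have hvj : ¬ 0 < v j := fun h => (mem_compl.mp hj) ((hmemA j).mpr h)
          simp [hχdef, hvi, hvj]
        rw [hzero, add_zero]
        apply sum_congr rfl; intro j hj
        have hvj : 0 < v j := (hmemA j).mp hj
        simp [hχdef, hvi, hvj]
    have hQ := hkA A hAne hsupp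
    have h3 : a * (2 * k * ∑ i ∈ A, π i)
        ≤ a * ((∑ i ∈ A, ∑ j ∈ Aᶜ, J i j) + ∑ i ∈ Aᶜ, ∑ j ∈ A, J i j) :=
      mul_le_mul_of_nonneg_left hQ hapos.le
    rw [hsum_v, hsum_r, hind]
    have heq : 2 * k * ((∑ i, π i * v' i) + a * ∑ i ∈ A, π i)
        = 2 * k * (∑ i, π i * v' i) + a * (2 * k * ∑ i ∈ A, π i) := by ring
    rw [heq]
    exact add_le_add hIH h3

lemma dirichlet_lb {E : Type*} [Fintype E] [DecidableEq E]
    (π : E → ℝ) (hπpos : ∀ i, 0 < π i)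
    (J : E → E → ℝ) (hJ : ∀ i j, 0 ≤ J i j) (hJsymm : ∀ i j, J i j = J j i)
    (M : ℝ) (hM0 : 0 < M) (hJrow : ∀ i, ∑ j, J i j ≤ M * π i)
    (k : ℝ) (hk0 : 0 ≤ k)
    (hkA : ∀ A : Finset E, A.Nonempty → (∑ i ∈ A, π i) ≤ 1/2 →
      2 * k * (∑ i ∈ A, π i) ≤ (∑ i ∈ A, ∑ j ∈ Aᶜ, J i j) + ∑ i ∈ Aᶜ, ∑ j ∈ A, J i j)
    (u : E → ℝ) (hu : ∀ i, 0 ≤ u i)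
    (hsupp : ∑ i ∈ univ.filter (fun i => 0 < u i), π i ≤ 1/2) :
    k ^ 2 * (∑ i, π i * u i ^ 2) ≤ M * ∑ i, ∑ j, J i j * (u j - u i) ^ 2 := by
  classical
  set v : E → ℝ := fun i => u i ^ 2 with hvdef
  have hfilter : univ.filter (fun i => 0 < v i) = univ.filter (fun i => 0 < u i) := by
    apply filter_congr
    intro i _
    simp only [hvdef]
    constructor
    · intro h
      rcases (hu i).lt_or_eq with h' | h'
      · exact h'
      · exfalso; rw [← h'] at h; simp at h
    · intro h; positivity
  have h1 : 2 * k * ∑ i, π i * v i ≤ ∑ i, ∑ j, J i j * |v j - v i| := by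
    apply coarea π hπpos J hJ k hk0 hkA v (fun i => sq_nonneg (u i))
    rw [hfilter]; exact hsupp
  set P := ∑ i, π i * u i ^ 2 with hP
  have hPnn : 0 ≤ P := sum_nonneg fun i _ => mul_nonneg (hπpos i).le (sq_nonneg _)
  set Ed := ∑ i, ∑ j, J i j * (u j - u i) ^ 2 with hEd
  have hEdnn : 0 ≤ Ed :=
    sum_nonneg fun i _ => sum_nonneg fun j _ => mul_nonneg (hJ i j) (sq_nonneg _)
  set C := ∑ i, ∑ j, J i j * |v j - v i| with hC
  have hCnn : 0 ≤ C :=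
    sum_nonneg fun i _ => sum_nonneg fun j _ => mul_nonneg (hJ i j) (abs_nonneg _)
  -- Cauchy-Schwarz
  have h2 : C ^ 2 ≤ Ed * ∑ i, ∑ j, J i j * (u j + u i) ^ 2 := by
    have key := Finset.sum_mul_sq_le_sq_mul_sq (univ : Finset (E × E))
      (fun p => Real.sqrt (J p.1 p.2) * |u p.2 - u p.1|)
      (fun p => Real.sqrt (J p.1 p.2) * (u p.2 + u p.1))
    have e1 : ∑ p : E × E, (Real.sqrt (J p.1 p.2) * |u p.2 - u p.1|)
        * (Real.sqrt (J p.1 p.2) * (u p.2 + u p.1)) = C := by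
      rw [hC, Fintype.sum_prod_type]
      apply sum_congr rfl; intro i _
      apply sum_congr rfl; intro j _
      have : Real.sqrt (J i j) * |u j - u i| * (Real.sqrt (J i j) * (u j + u i))
          = J i j * (|u j - u i| * (u j + u i)) := by
        rw [show Real.sqrt (J i j) * |u j - u i| * (Real.sqrt (J i j) * (u j + u i))
          = (Real.sqrt (J i j) * Real.sqrt (J i j)) * (|u j - u i| * (u j + u i)) by ring,
          Real.mul_self_sqrt (hJ i j)]
      rw [this]
      congr 1
      rw [← abs_of_nonneg (add_nonneg (hu j) (hu i)), ← abs_mul]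
      congr 1
      simp only [hvdef]; ring
    have e2 : ∑ p : E × E, (Real.sqrt (J p.1 p.2) * |u p.2 - u p.1|) ^ 2 = Ed := by
      rw [hEd, Fintype.sum_prod_type]
      apply sum_congr rfl; intro i _
      apply sum_congr rfl; intro j _
      rw [mul_pow, sq_abs, Real.sq_sqrt (hJ i j)]
    have e3 : ∑ p : E × E, (Real.sqrt (J p.1 p.2) * (u p.2 + u p.1)) ^ 2
        = ∑ i, ∑ j, J i j * (u j + u i) ^ 2 := by
      rw [Fintype.sum_prod_type]
      apply sum_congr rfl; intro i _
      apply sum_congr rfl; intro j _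
      rw [mul_pow, Real.sq_sqrt (hJ i j)]
    rw [e1, e2, e3] at key
    exact key
  -- bound the second factor
  have h3 : ∑ i, ∑ j, J i j * (u j + u i) ^ 2 ≤ 4 * M * P := by
    have step1 : ∑ i, ∑ j, J i j * (u j + u i) ^ 2
        ≤ ∑ i, ∑ j, (2 * (J i j * u j ^ 2) + 2 * (J i j * u i ^ 2)) := by
      apply sum_le_sum; intro i _
      apply sum_le_sum; intro j _
      nlinarith [hJ i j, sq_nonneg (u j - u i)]
    have ha : ∑ i, ∑ j, J i j * u i ^ 2 ≤ M * P := by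
      rw [hP, mul_sum]
      apply sum_le_sum; intro i _
      rw [show ∑ j, J i j * u i ^ 2 = (∑ j, J i j) * u i ^ 2 by rw [sum_mul]]
      calc (∑ j, J i j) * u i ^ 2 ≤ (M * π i) * u i ^ 2 :=
            mul_le_mul_of_nonneg_right (hJrow i) (sq_nonneg _)
        _ = M * (π i * u i ^ 2) := by ring
    have hb : ∑ i, ∑ j, J i j * u j ^ 2 ≤ M * P := by
      rw [Finset.sum_comm]
      calc ∑ j, ∑ i, J i j * u j ^ 2 = ∑ j, ∑ i, J j i * u j ^ 2 := by
            apply sum_congr rfl; intro j _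
            apply sum_congr rfl; intro i _
            rw [hJsymm i j]
        _ ≤ M * P := by
            rw [hP, mul_sum]
            apply sum_le_sum; intro j _
            rw [show ∑ i, J j i * u j ^ 2 = (∑ i, J j i) * u j ^ 2 by rw [sum_mul]]
            calc (∑ i, J j i) * u j ^ 2 ≤ (M * π j) * u j ^ 2 :=
                  mul_le_mul_of_nonneg_right (hJrow j) (sq_nonneg _)
              _ = M * (π j * u j ^ 2) := by ring
    calc ∑ i, ∑ j, J i j * (u j + u i) ^ 2
        ≤ ∑ i, ∑ j, (2 * (J i j * u j ^ 2) + 2 * (J i j * u i ^ 2)) := step1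
      _ = 2 * (∑ i, ∑ j, J i j * u j ^ 2) + 2 * (∑ i, ∑ j, J i j * u i ^ 2) := by
          simp [sum_add_distrib, mul_sum]
      _ ≤ 2 * (M * P) + 2 * (M * P) := by
          apply add_le_add <;> [exact mul_le_mul_of_nonneg_left hb (by norm_num);
            exact mul_le_mul_of_nonneg_left ha (by norm_num)]
      _ = 4 * M * P := by ring
  -- combine
  have hkP : 0 ≤ k * P := mul_nonneg hk0 hPnn
  rcases hPnn.lt_or_eq with hPpos | hP0
  · have hCs : (2 * k * P) ^ 2 ≤ C ^ 2 := by
      apply sq_le_sq' <;> nlinarith [hkP]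
    have hchain : (2 * k * P) ^ 2 ≤ Ed * (4 * M * P) := by
      calc (2 * k * P) ^ 2 ≤ C ^ 2 := hCs
        _ ≤ Ed * ∑ i, ∑ j, J i j * (u j + u i) ^ 2 := h2
        _ ≤ Ed * (4 * M * P) := mul_le_mul_of_nonneg_left h3 hEdnn
    nlinarith [hchain, hPpos]
  · rw [← hP0]
    nlinarith [hEdnn, hM0]

lemma perfn {E : Type*} [Fintype E] [DecidableEq E] [Nonempty E]
    (π : E → ℝ) (hπpos : ∀ i, 0 < π i) (hπ1 : ∑ i, π i = 1)
    (J : E → E → ℝ) (hJ : ∀ i j, 0 ≤ J i j) (hJsymm : ∀ i j, J i j = J j i)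
    (M : ℝ) (hM0 : 0 < M) (hJrow : ∀ i, ∑ j, J i j ≤ M * π i)
    (k : ℝ) (hk0 : 0 ≤ k)
    (hkA : ∀ A : Finset E, A.Nonempty → (∑ i ∈ A, π i) ≤ 1/2 →
      2 * k * (∑ i ∈ A, π i) ≤ (∑ i ∈ A, ∑ j ∈ Aᶜ, J i j) + ∑ i ∈ Aᶜ, ∑ j ∈ A, J i j)
    (f : E → ℝ) (hf0 : ∑ i, π i * f i = 0) (hf2 : ∑ i, π i * f i ^ 2 = 1) :
    k ^ 2 / (2 * M) ≤ (1 / 2) * ∑ i, ∑ j, J i j * (f j - f i) ^ 2 := by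
  classical
  obtain ⟨c, hgt, hlt⟩ := exists_median π hπpos hπ1 f
  set g : E → ℝ := fun i => max (f i - c) 0 with hgdef
  set h : E → ℝ := fun i => max (c - f i) 0 with hhdef
  have hg : ∀ i, 0 ≤ g i := fun i => le_max_right _ _
  have hh : ∀ i, 0 ≤ h i := fun i => le_max_right _ _
  have hgh0 : ∀ i, g i * h i = 0 := by
    intro i
    rcases le_total (f i) c with hc' | hc'
    · rw [hgdef]; simp only [max_eq_right (by linarith : f i - c ≤ 0)]; ring
    · rw [hhdef]; simp only [max_eq_right (by linarith : c - f i ≤ 0)]; ring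
  have hfgh : ∀ i, f i - c = g i - h i := by
    intro i
    rcases le_total (f i) c with hc' | hc'
    · rw [hgdef, hhdef]
      simp only [max_eq_right (by linarith : f i - c ≤ 0),
        max_eq_left (by linarith : (0:ℝ) ≤ c - f i)]
      ring
    · rw [hgdef, hhdef]
      simp only [max_eq_left (by linarith : (0:ℝ) ≤ f i - c),
        max_eq_right (by linarith : c - f i ≤ 0)]
      ring
  have hsuppg : ∑ i ∈ univ.filter (fun i => 0 < g i), π i ≤ 1/2 := by
    have : univ.filter (fun i => 0 < g i) = univ.filter (fun i => c < f i) := by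
      apply filter_congr; intro i _
      rw [hgdef]
      simp [lt_max_iff, sub_pos]
    rw [this]; exact hgt
  have hsupph : ∑ i ∈ univ.filter (fun i => 0 < h i), π i ≤ 1/2 := by
    have : univ.filter (fun i => 0 < h i) = univ.filter (fun i => f i < c) := by
      apply filter_congr; intro i _
      rw [hhdef]
      simp [lt_max_iff, sub_pos]
    rw [this]; exact hlt
  have hG := dirichlet_lb π hπpos J hJ hJsymm M hM0 hJrow k hk0 hkA g hg hsuppg
  have hH := dirichlet_lb π hπpos J hJ hJsymm M hM0 hJrow k hk0 hkA h hh hsupph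
  -- variance lower bound
  have hvar : (1:ℝ) ≤ (∑ i, π i * g i ^ 2) + ∑ i, π i * h i ^ 2 := by
    have hsq : ∀ i, g i ^ 2 + h i ^ 2 = (f i - c) ^ 2 := by
      intro i
      calc g i ^ 2 + h i ^ 2 = (g i - h i) ^ 2 + 2 * (g i * h i) := by ring
        _ = (f i - c) ^ 2 + 2 * 0 := by rw [← hfgh i, hgh0 i]
        _ = (f i - c) ^ 2 := by ring
    have : (∑ i, π i * g i ^ 2) + ∑ i, π i * h i ^ 2 = ∑ i, π i * (f i - c) ^ 2 := by
      rw [← sum_add_distrib]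
      apply sum_congr rfl; intro i _
      rw [← hsq i]; ring
    rw [this]
    have : ∑ i, π i * (f i - c) ^ 2
        = (∑ i, π i * f i ^ 2) - 2 * c * (∑ i, π i * f i) + c ^ 2 * ∑ i, π i := by
      rw [mul_sum, mul_sum, ← sum_sub_distrib, ← sum_add_distrib]
      apply sum_congr rfl; intro i _
      ring
    rw [this, hf0, hf2, hπ1]
    nlinarith [sq_nonneg c]
  -- Dirichlet form comparison
  have hdir : (∑ i, ∑ j, J i j * (g j - g i) ^ 2) + (∑ i, ∑ j, J i j * (h j - h i) ^ 2)
      ≤ ∑ i, ∑ j, J i j * (f j - f i) ^ 2 := by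
    rw [← sum_add_distrib]
    apply sum_le_sum; intro i _
    rw [← sum_add_distrib]
    apply sum_le_sum; intro j _
    have e1 : f j - f i = (g j - h j) - (g i - h i) := by
      have := hfgh i; have := hfgh j
      linarith
    rw [← mul_add]
    apply mul_le_mul_of_nonneg_left _ (hJ i j)
    rw [e1]
    nlinarith [hgh0 i, hgh0 j, mul_nonneg (hg j) (hh i), mul_nonneg (hg i) (hh j)]
  -- combine
  have hkey : k ^ 2 ≤ M * ∑ i, ∑ j, J i j * (f j - f i) ^ 2 := by
    calc k ^ 2 = k ^ 2 * 1 := by ring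
      _ ≤ k ^ 2 * ((∑ i, π i * g i ^ 2) + ∑ i, π i * h i ^ 2) :=
          mul_le_mul_of_nonneg_left hvar (sq_nonneg k)
      _ = k ^ 2 * (∑ i, π i * g i ^ 2) + k ^ 2 * ∑ i, π i * h i ^ 2 := by ring
      _ ≤ M * (∑ i, ∑ j, J i j * (g j - g i) ^ 2) + M * ∑ i, ∑ j, J i j * (h j - h i) ^ 2 :=
          add_le_add hG hH
      _ = M * ((∑ i, ∑ j, J i j * (g j - g i) ^ 2) + ∑ i, ∑ j, J i j * (h j - h i) ^ 2) := by
          ring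
      _ ≤ M * ∑ i, ∑ j, J i j * (f j - f i) ^ 2 := mul_le_mul_of_nonneg_left hdir hM0.le
  rw [div_le_iff₀ (by positivity)]
  linarith

theorem stmt_3 {E : Type*} [Fintype E] [DecidableEq E] [Nonempty E]
    (π : E → ℝ) (hπpos : ∀ i, 0 < π i) (hπ1 : ∑ i, π i = 1)
    (q : E → E → ℝ) (hqnonneg : ∀ i j, 0 ≤ q i j)
    (hrev : ∀ i j, π i * q i j = π j * q j i)
    (M : ℝ) (hM0 : 0 < M) (hM : ∀ i, ∑ j, q i j ≤ M)
    (k lam1 : ℝ)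
    (hk : k = sInf {x : ℝ | ∃ A : Finset E,
      0 < ∑ i ∈ A, π i ∧ (∑ i ∈ A, π i) < 1 ∧
      x = (∑ i ∈ A, ∑ j ∈ Aᶜ, π i * q i j) /
        min (∑ i ∈ A, π i) (∑ i ∈ Aᶜ, π i)})
    (hlam1 : lam1 = sInf {x : ℝ | ∃ f : E → ℝ,
      (∑ i, π i * f i) = 0 ∧ (∑ i, π i * f i ^ 2) = 1 ∧
      x = (1 / 2) * ∑ i, ∑ j, π i * q i j * (f j - f i) ^ 2}) :
    lam1 ≥ k ^ 2 / (2 * M) := by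
  classical
  have hJ : ∀ i j, 0 ≤ π i * q i j := fun i j => mul_nonneg (hπpos i).le (hqnonneg i j)
  have hJrow : ∀ i, ∑ j, π i * q i j ≤ M * π i := by
    intro i
    rw [← mul_sum]
    calc π i * ∑ j, q i j ≤ π i * M := mul_le_mul_of_nonneg_left (hM i) (hπpos i).le
      _ = M * π i := mul_comm _ _
  have hset_nonneg : ∀ x ∈ {x : ℝ | ∃ A : Finset E,
      0 < ∑ i ∈ A, π i ∧ (∑ i ∈ A, π i) < 1 ∧
      x = (∑ i ∈ A, ∑ j ∈ Aᶜ, π i * q i j) /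
        min (∑ i ∈ A, π i) (∑ i ∈ Aᶜ, π i)}, (0:ℝ) ≤ x := by
    rintro x ⟨A, hA0, hA1, rfl⟩
    apply div_nonneg
    · exact sum_nonneg fun i _ => sum_nonneg fun j _ => hJ i j
    · exact le_min hA0.le (sum_nonneg fun i _ => (hπpos i).le)
  have hk0 : 0 ≤ k := hk ▸ Real.sInf_nonneg hset_nonneg
  have hkA : ∀ A : Finset E, A.Nonempty → (∑ i ∈ A, π i) ≤ 1/2 →
      2 * k * (∑ i ∈ A, π i) ≤ (∑ i ∈ A, ∑ j ∈ Aᶜ, π i * q i j)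
        + ∑ i ∈ Aᶜ, ∑ j ∈ A, π i * q i j := by
    intro A hAne hA12
    have hp : 0 < ∑ i ∈ A, π i := sum_pos (fun i _ => hπpos i) hAne
    have hcompl : ∑ i ∈ Aᶜ, π i = 1 - ∑ i ∈ A, π i := by
      have := Finset.sum_add_sum_compl A π
      rw [hπ1] at this; linarith
    have hp1 : (∑ i ∈ A, π i) < 1 := lt_of_le_of_lt hA12 (by norm_num)
    have hmin : min (∑ i ∈ A, π i) (∑ i ∈ Aᶜ, π i) = ∑ i ∈ A, π i := by
      rw [hcompl]; exact min_eq_left (by linarith)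
    have hmem : ((∑ i ∈ A, ∑ j ∈ Aᶜ, π i * q i j) /
        min (∑ i ∈ A, π i) (∑ i ∈ Aᶜ, π i)) ∈ {x : ℝ | ∃ A : Finset E,
        0 < ∑ i ∈ A, π i ∧ (∑ i ∈ A, π i) < 1 ∧
        x = (∑ i ∈ A, ∑ j ∈ Aᶜ, π i * q i j) /
          min (∑ i ∈ A, π i) (∑ i ∈ Aᶜ, π i)} := ⟨A, hp, hp1, rfl⟩
    have hle : k ≤ (∑ i ∈ A, ∑ j ∈ Aᶜ, π i * q i j) /
        min (∑ i ∈ A, π i) (∑ i ∈ Aᶜ, π i) :=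
      hk ▸ csInf_le ⟨0, fun x hx => hset_nonneg x hx⟩ hmem
    rw [hmin] at hle
    have hQ : k * (∑ i ∈ A, π i) ≤ ∑ i ∈ A, ∑ j ∈ Aᶜ, π i * q i j :=
      (le_div_iff₀ hp).mp hle
    have hsymmQ : ∑ i ∈ Aᶜ, ∑ j ∈ A, π i * q i j = ∑ i ∈ A, ∑ j ∈ Aᶜ, π i * q i j := by
      rw [Finset.sum_comm]
      apply sum_congr rfl; intro x hx
      apply sum_congr rfl; intro y hy
      exact (hrev x y).symm
    rw [hsymmQ]
    linarith
  by_cases hS : {x : ℝ | ∃ f : E → ℝ,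
      (∑ i, π i * f i) = 0 ∧ (∑ i, π i * f i ^ 2) = 1 ∧
      x = (1 / 2) * ∑ i, ∑ j, π i * q i j * (f j - f i) ^ 2}.Nonempty
  · rw [ge_iff_le, hlam1]
    apply le_csInf hS
    rintro x ⟨f, hf0, hf2, rfl⟩
    exact perfn π hπpos hπ1 (fun i j => π i * q i j) hJ hrev M hM0 hJrow k hk0 hkA f hf0 hf2
  · have hkset : {x : ℝ | ∃ A : Finset E,
        0 < ∑ i ∈ A, π i ∧ (∑ i ∈ A, π i) < 1 ∧
        x = (∑ i ∈ A, ∑ j ∈ Aᶜ, π i * q i j) /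
          min (∑ i ∈ A, π i) (∑ i ∈ Aᶜ, π i)} = ∅ := by
      rcases Set.eq_empty_or_nonempty {x : ℝ | ∃ A : Finset E,
          0 < ∑ i ∈ A, π i ∧ (∑ i ∈ A, π i) < 1 ∧
          x = (∑ i ∈ A, ∑ j ∈ Aᶜ, π i * q i j) /
            min (∑ i ∈ A, π i) (∑ i ∈ Aᶜ, π i)} with he | hne
      · exact he
      · exfalso
        obtain ⟨x, A, hA0, hA1, _⟩ := hne
        apply hS
        set p := ∑ i ∈ A, π i with hpdef
        have hcompl : ∑ i ∈ Aᶜ, π i = 1 - p := by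
          have := Finset.sum_add_sum_compl A π
          rw [hπ1] at this; linarith
        have h1p : 0 < 1 - p := by linarith
        set sp := Real.sqrt p with hspdef
        set sq' := Real.sqrt (1 - p) with hsqdef
        have hsp0 : 0 < sp := Real.sqrt_pos.mpr hA0
        have hsq0 : 0 < sq' := Real.sqrt_pos.mpr h1p
        have hsp2 : sp ^ 2 = p := Real.sq_sqrt hA0.le
        have hsq2 : sq' ^ 2 = 1 - p := Real.sq_sqrt h1p.le
        set f : E → ℝ := fun i => if i ∈ A then sq' / sp else -(sp / sq') with hfdef
        have hfA : ∀ i ∈ A, f i = sq' / sp := by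
          intro i hi; rw [hfdef]; simp [hi]
        have hfAc : ∀ i ∈ Aᶜ, f i = -(sp / sq') := by
          intro i hi; rw [hfdef]; simp [mem_compl.mp hi]
        have hsum1 : ∑ i, π i * f i = 0 := by
          rw [← Finset.sum_add_sum_compl A]
          have e1 : ∑ i ∈ A, π i * f i = p * (sq' / sp) := by
            rw [hpdef, sum_mul]
            apply sum_congr rfl; intro i hi; rw [hfA i hi]
          have e2 : ∑ i ∈ Aᶜ, π i * f i = (1 - p) * (-(sp / sq')) := by
            rw [← hcompl, sum_mul]
            apply sum_congr rfl; intro i hi; rw [hfAc i hi]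
          have ha' : p * (sq' / sp) = sq' * sp := by
            rw [← hsp2]; field_simp
          have hb' : (1 - p) * (sp / sq') = sq' * sp := by
            rw [← hsq2]; field_simp
          rw [e1, e2, mul_neg, ha', hb']
          ring
        have hsum2 : ∑ i, π i * f i ^ 2 = 1 := by
          rw [← Finset.sum_add_sum_compl A]
          have e1 : ∑ i ∈ A, π i * f i ^ 2 = p * (sq' / sp) ^ 2 := by
            rw [hpdef, sum_mul]
            apply sum_congr rfl; intro i hi; rw [hfA i hi]
          have e2 : ∑ i ∈ Aᶜ, π i * f i ^ 2 = (1 - p) * (sp / sq') ^ 2 := by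
            rw [← hcompl, sum_mul]
            apply sum_congr rfl; intro i hi; rw [hfAc i hi]; ring
          rw [e1, e2, div_pow, div_pow, hsp2, hsq2]
          field_simp; ring
        exact ⟨_, f, hsum1, hsum2, rfl⟩
    rw [ge_iff_le, hlam1, Set.not_nonempty_iff_eq_empty.mp hS, Real.sInf_empty,
      hk, hkset, Real.sInf_empty]
    norm_num
end

section
/- If a symmetric form satisfies the logarithmic Sobolev inequality ∫ f² log(f²/‖f‖₂²) dπ ≤ C·D(f) for all f in the domain, then it satisfies the Poincaré inequality Var(f) ≤ (C/2)·D(f): applying the log-Sobolev inequality to f = 1 + εg with π(g) = 0 and expanding to second order in ε gives 2Var(g)·ε² + o(ε²) ≤ C·D(g)·ε². -/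
open Filter Topology


open Finset

/-- (log(1+x) - x)/x² → -1/2 as x → 0. -/
lemma limA : Tendsto (fun x : ℝ => (Real.log (1+x) - x) / x^2) (𝓝[≠] (0:ℝ)) (𝓝 (-(1/2))) := by
  have hev : ∀ᶠ x : ℝ in 𝓝[≠] (0:ℝ), x ∈ Set.Ioo (-(1:ℝ)) 1 :=
    eventually_nhdsWithin_of_eventually_nhds (Ioo_mem_nhds (by norm_num) (by norm_num))
  apply HasDerivAt.lhopital_zero_nhdsNE (f' := fun x => (1+x)⁻¹ - 1) (g' := fun x => 2*x)
  · filter_upwards [hev] with x hx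
    have h1 : (0:ℝ) < 1 + x := by have := hx.1; linarith
    have hlog : HasDerivAt (fun y : ℝ => Real.log (1+y)) ((1+x)⁻¹) x := by
      have hadd : HasDerivAt (fun y : ℝ => 1 + y) 1 x := (hasDerivAt_id x).const_add 1
      have h := (Real.hasDerivAt_log h1.ne').comp x hadd
      rw [mul_one] at h
      exact h
    exact hlog.sub (hasDerivAt_id x)
  · filter_upwards with x
    simpa [mul_comm] using (hasDerivAt_pow 2 x)
  · filter_upwards [self_mem_nhdsWithin] with x (hx : x ≠ 0)
    simpa using hx
  · have : ContinuousAt (fun x : ℝ => Real.log (1+x) - x) 0 := by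
      have : ContinuousAt (fun y : ℝ => 1 + y) 0 := by fun_prop
      exact ((Real.continuousAt_log (by norm_num)).comp this).sub continuousAt_id
    simpa using this.tendsto.mono_left nhdsWithin_le_nhds
  · have : ContinuousAt (fun x : ℝ => x^2) 0 := by fun_prop
    simpa using this.tendsto.mono_left nhdsWithin_le_nhds
  · have key : Tendsto (fun x : ℝ => -(2 * (1+x))⁻¹) (𝓝[≠] (0:ℝ)) (𝓝 (-(1/2))) := by
      have : ContinuousAt (fun x : ℝ => -(2 * (1+x))⁻¹) 0 := by
        apply ContinuousAt.neg; apply ContinuousAt.inv₀ (by fun_prop); norm_num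
      have := this.tendsto.mono_left (nhdsWithin_le_nhds (s := {(0:ℝ)}ᶜ))
      norm_num at this ⊢
      exact this
    refine key.congr' ?_
    filter_upwards [hev, self_mem_nhdsWithin] with x hx (hx0 : x ≠ 0)
    have h1 : (0:ℝ) < 1 + x := by have := hx.1; linarith
    field_simp
    ring

/-- log(1+t)/t → 1 as t → 0. -/
lemma limB : Tendsto (fun t : ℝ => Real.log (1+t) / t) (𝓝[≠] (0:ℝ)) (𝓝 1) := by
  have hlog : HasDerivAt (fun y : ℝ => Real.log (1+y)) 1 0 := by
    have hadd : HasDerivAt (fun y : ℝ => 1 + y) 1 0 := (hasDerivAt_id 0).const_add 1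
    have h := (Real.hasDerivAt_log (by norm_num : (1:ℝ)+0 ≠ 0)).comp 0 hadd
    rw [add_zero, inv_one, one_mul] at h
    exact h
  have := hasDerivAt_iff_tendsto_slope.mp hlog
  refine this.congr ?_
  intro t
  simp [slope_def_field]

/-- ((1+x)² log((1+x)²) - 2x)/x² → 3 as x → 0. -/
lemma limC : Tendsto (fun x : ℝ => ((1+x)^2 * Real.log ((1+x)^2) - 2*x) / x^2)
    (𝓝[≠] (0:ℝ)) (𝓝 3) := by
  have h1 : Tendsto (fun x : ℝ => 2*(1+x)^2 * ((Real.log (1+x) - x) / x^2) + (4 + 2*x))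
      (𝓝[≠] (0:ℝ)) (𝓝 3) := by
    have hc : Tendsto (fun x : ℝ => 2*(1+x)^2) (𝓝[≠] (0:ℝ)) (𝓝 2) := by
      have : ContinuousAt (fun x : ℝ => 2*(1+x)^2) 0 := by fun_prop
      simpa using this.tendsto.mono_left nhdsWithin_le_nhds
    have hd : Tendsto (fun x : ℝ => 4 + 2*x) (𝓝[≠] (0:ℝ)) (𝓝 4) := by
      have : ContinuousAt (fun x : ℝ => 4 + 2*x) 0 := by fun_prop
      simpa using this.tendsto.mono_left nhdsWithin_le_nhds
    have := (hc.mul limA).add hd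
    convert this using 2
    norm_num
  refine h1.congr' ?_
  filter_upwards [self_mem_nhdsWithin] with x (hx : x ≠ 0)
  have : Real.log ((1+x)^2) = 2 * Real.log (1+x) := by
    rw [Real.log_pow]; norm_num
  rw [this]
  field_simp
  ring

/-- scaled version: for any c, ((1+εc)² log((1+εc)²) - 2εc)/ε² → 3c². -/
lemma limD (c : ℝ) : Tendsto (fun ε : ℝ => ((1+ε*c)^2 * Real.log ((1+ε*c)^2) - 2*(ε*c)) / ε^2)
    (𝓝[≠] (0:ℝ)) (𝓝 (3*c^2)) := by
  rcases eq_or_ne c 0 with rfl | hc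
  · simp
  · have hmap : Tendsto (fun ε : ℝ => ε * c) (𝓝[≠] (0:ℝ)) (𝓝[≠] (0:ℝ)) := by
      rw [tendsto_nhdsWithin_iff]
      constructor
      · have : ContinuousAt (fun ε : ℝ => ε * c) 0 := by fun_prop
        simpa using this.tendsto.mono_left nhdsWithin_le_nhds
      · filter_upwards [self_mem_nhdsWithin] with ε (hε : ε ≠ 0)
        exact mul_ne_zero hε hc
    have := (limC.comp hmap).const_mul (c^2)
    have h3 : c^2 * 3 = 3 * c^2 := by ring
    rw [h3] at this
    refine this.congr' ?_
    filter_upwards [self_mem_nhdsWithin] with ε (hε : ε ≠ 0)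
    simp only [Function.comp]
    rw [mul_pow]
    field_simp

open Finset in
lemma key_centered {E : Type*} [Fintype E]
    (π : E → ℝ) (hπpos : ∀ i, 0 < π i) (hπ1 : ∑ i, π i = 1)
    (K : ℝ) (hK : 0 ≤ K)
    (g : E → ℝ) (hg0 : ∑ i, π i * g i = 0)
    (hF : ∀ ε : ℝ, ε ≠ 0 →
      (∑ i, π i * (1+ε*g i)^2 * Real.log ((1+ε*g i)^2 / (∑ j, π j * (1+ε*g j)^2))) ≤ ε^2 * K) :
    2 * (∑ i, π i * g i^2) ≤ K := by
  set m := ∑ i, π i * g i^2 with hm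
  have hm0 : 0 ≤ m := Finset.sum_nonneg fun i _ => mul_nonneg (hπpos i).le (sq_nonneg _)
  rcases eq_or_lt_of_le hm0 with hmz | hmpos
  · rw [← hmz]; simpa using hK
  -- the normalizing sum
  have hN : ∀ ε : ℝ, (∑ j, π j * (1+ε*g j)^2) = 1 + ε^2 * m := by
    intro ε
    have h1 : ∀ j : E, π j * (1+ε*g j)^2
        = π j + (2*ε)*(π j * g j) + ε^2*(π j * g j^2) := fun j => by ring
    rw [Finset.sum_congr rfl (fun j _ => h1 j), Finset.sum_add_distrib,
      Finset.sum_add_distrib, ← Finset.mul_sum, ← Finset.mul_sum, hπ1, hg0, ← hm]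
    ring
  have hNpos : ∀ ε : ℝ, (0:ℝ) < 1 + ε^2 * m := by
    intro ε; have : 0 ≤ ε^2 * m := mul_nonneg (sq_nonneg ε) hm0
    linarith
  -- eventual positivity of 1 + ε g i
  have hev : ∀ᶠ ε : ℝ in 𝓝[≠] (0:ℝ), ∀ i, 0 < 1 + ε * g i := by
    apply eventually_nhdsWithin_of_eventually_nhds
    rw [Filter.eventually_all]
    intro i
    have ht : Tendsto (fun ε : ℝ => 1 + ε * g i) (𝓝 0) (𝓝 1) := by
      have : ContinuousAt (fun ε : ℝ => 1 + ε * g i) 0 := by fun_prop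
      simpa using this.tendsto
    exact ht.eventually (eventually_gt_nhds (by norm_num))
  -- limit of the second piece
  have hL2 : Tendsto (fun ε : ℝ => (1+ε^2*m) * Real.log (1+ε^2*m) / ε^2)
      (𝓝[≠] (0:ℝ)) (𝓝 m) := by
    have hmap : Tendsto (fun ε : ℝ => ε^2 * m) (𝓝[≠] (0:ℝ)) (𝓝[≠] (0:ℝ)) := by
      rw [tendsto_nhdsWithin_iff]
      constructor
      · have : ContinuousAt (fun ε : ℝ => ε^2 * m) 0 := by fun_prop
        simpa using this.tendsto.mono_left nhdsWithin_le_nhds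
      · filter_upwards [self_mem_nhdsWithin] with ε (hε : ε ≠ 0)
        exact mul_ne_zero (pow_ne_zero 2 hε) hmpos.ne'
    have hone : Tendsto (fun t : ℝ => (1+t) * (Real.log (1+t) / t)) (𝓝[≠] (0:ℝ)) (𝓝 1) := by
      have hc : Tendsto (fun t : ℝ => 1 + t) (𝓝[≠] (0:ℝ)) (𝓝 1) := by
        have : ContinuousAt (fun t : ℝ => 1 + t) 0 := by fun_prop
        simpa using this.tendsto.mono_left nhdsWithin_le_nhds
      simpa using hc.mul limB
    have := (hone.comp hmap).const_mul m
    rw [mul_one] at this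
    refine this.congr' ?_
    filter_upwards [self_mem_nhdsWithin] with ε (hε : ε ≠ 0)
    simp only [Function.comp]
    field_simp
  -- limit of the whole quotient
  have hTend : Tendsto (fun ε : ℝ =>
      (∑ i, π i * (1+ε*g i)^2 * Real.log ((1+ε*g i)^2 / (∑ j, π j * (1+ε*g j)^2))) / ε^2)
      (𝓝[≠] (0:ℝ)) (𝓝 (2*m)) := by
    have hsum : Tendsto (fun ε : ℝ =>
        ∑ i, π i * (((1+ε*g i)^2 * Real.log ((1+ε*g i)^2) - 2*(ε*g i)) / ε^2))
        (𝓝[≠] (0:ℝ)) (𝓝 (∑ i, π i * (3 * g i^2))) := by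
      apply tendsto_finset_sum
      intro i _
      exact ((limD (g i)).const_mul (π i))
    have hG := hsum.sub hL2
    have h3m : (∑ i, π i * (3 * g i^2)) - m = 2*m := by
      have : (∑ i, π i * (3 * g i^2)) = 3 * m := by
        rw [hm, Finset.mul_sum]
        exact Finset.sum_congr rfl fun i _ => by ring
      rw [this]; ring
    rw [h3m] at hG
    refine hG.congr' ?_
    filter_upwards [hev, self_mem_nhdsWithin] with ε hpos (hε : ε ≠ 0)
    have e1 : (∑ i, π i * (1+ε*g i)^2 * Real.log ((1+ε*g i)^2 / (∑ j, π j * (1+ε*g j)^2)))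
        = (∑ i, π i * ((1+ε*g i)^2 * Real.log ((1+ε*g i)^2) - 2*(ε*g i)))
          - (1+ε^2*m) * Real.log (1+ε^2*m) := by
      rw [hN ε]
      have h2 : ∀ i : E, π i * (1+ε*g i)^2 * Real.log ((1+ε*g i)^2 / (1+ε^2*m))
          = (π i * ((1+ε*g i)^2 * Real.log ((1+ε*g i)^2) - 2*(ε*g i))
            + (2*ε)*(π i * g i)) - (π i * (1+ε*g i)^2) * Real.log (1+ε^2*m) := by
        intro i
        rw [Real.log_div (pow_ne_zero 2 (hpos i).ne') (hNpos ε).ne']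
        ring
      rw [Finset.sum_congr rfl (fun i _ => h2 i), Finset.sum_sub_distrib,
        Finset.sum_add_distrib, ← Finset.mul_sum, hg0, ← Finset.sum_mul, hN ε]
      ring
    rw [e1, sub_div, Finset.sum_div]
    congr 1
    exact Finset.sum_congr rfl fun i _ => (mul_div_assoc _ _ _).symm
  -- conclude
  refine le_of_tendsto hTend ?_
  filter_upwards [self_mem_nhdsWithin] with ε (hε : ε ≠ 0)
  rw [div_le_iff₀ (by positivity : (0:ℝ) < ε^2)]
  have := hF ε hε
  linarith


/- STATEMENT 19: on a finite state space, the logarithmic Sobolev inequality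
with constant C implies the Poincaré inequality with constant C/2. -/
theorem stmt_19 {E : Type*} [Fintype E]
    (π : E → ℝ) (hπpos : ∀ i, 0 < π i) (hπ1 : ∑ i, π i = 1)
    (q : E → E → ℝ) (hqnonneg : ∀ i j, i ≠ j → 0 ≤ q i j)
    (hrev : ∀ i j, π i * q i j = π j * q j i)
    (C : ℝ) (hC : 0 < C)
    (hLSI : ∀ f : E → ℝ,
      (∑ i, π i * f i ^ 2 * Real.log (f i ^ 2 / (∑ j, π j * f j ^ 2))) ≤
        C * ((1 / 2) * ∑ i, ∑ j, π i * q i j * (f j - f i) ^ 2)) :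
    ∀ g : E → ℝ,
      (∑ i, π i * g i ^ 2) - (∑ i, π i * g i) ^ 2 ≤
        (C / 2) * ((1 / 2) * ∑ i, ∑ j, π i * q i j * (g j - g i) ^ 2) := by
  intro g
  set s : ℝ := ∑ i, π i * g i with hs
  set g0 : E → ℝ := fun i => g i - s with hg0def
  set S : ℝ := ∑ i, ∑ j, π i * q i j * (g j - g i) ^ 2 with hS
  have hg0 : ∑ i, π i * g0 i = 0 := by
    have h1 : ∀ i : E, π i * g0 i = π i * g i - s * π i := fun i => by
      simp only [hg0def]; ring
    rw [Finset.sum_congr rfl fun i _ => h1 i, Finset.sum_sub_distrib, ← Finset.mul_sum, hπ1,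
      ← hs]
    ring
  have hD : ∀ i j : E, g0 j - g0 i = g j - g i := fun i j => by simp [hg0def]
  have hvar : (∑ i, π i * g i ^ 2) - s ^ 2 = ∑ i, π i * g0 i ^ 2 := by
    have h1 : ∀ i : E, π i * g0 i ^ 2
        = π i * g i ^ 2 - (2*s)*(π i * g i) + s^2 * π i := fun i => by
      simp only [hg0def]; ring
    rw [Finset.sum_congr rfl fun i _ => h1 i, Finset.sum_add_distrib, Finset.sum_sub_distrib,
      ← Finset.mul_sum, ← Finset.mul_sum, hπ1, ← hs]
    ring
  have hSnn : 0 ≤ S := by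
    rw [hS]
    apply Finset.sum_nonneg; intro i _
    apply Finset.sum_nonneg; intro j _
    rcases eq_or_ne i j with rfl | hij
    · simp
    · exact mul_nonneg (mul_nonneg (hπpos i).le (hqnonneg i j hij)) (sq_nonneg _)
  set K : ℝ := C * ((1/2) * S) with hKdef
  have hK : 0 ≤ K := by
    rw [hKdef]
    have : (0:ℝ) ≤ (1/2) * S := by linarith
    exact mul_nonneg hC.le this
  have hF : ∀ ε : ℝ, ε ≠ 0 →
      (∑ i, π i * (1+ε*g0 i)^2 * Real.log ((1+ε*g0 i)^2 / (∑ j, π j * (1+ε*g0 j)^2)))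
        ≤ ε^2 * K := by
    intro ε _
    have h := hLSI (fun i => 1 + ε * g0 i)
    have e2 : (∑ i, ∑ j, π i * q i j * ((1+ε*g0 j) - (1+ε*g0 i))^2) = ε^2 * S := by
      rw [hS, Finset.mul_sum]
      refine Finset.sum_congr rfl fun i _ => ?_
      rw [Finset.mul_sum]
      refine Finset.sum_congr rfl fun j _ => ?_
      have e3 : (1+ε*g0 j) - (1+ε*g0 i) = ε * (g j - g i) := by
        rw [← hD i j]; ring
      rw [e3]; ring
    rw [e2] at h
    have e4 : C * (1/2 * (ε^2 * S)) = ε^2 * K := by rw [hKdef]; ring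
    rw [e4] at h
    exact h
  have hkey := key_centered π hπpos hπ1 K hK g0 hg0 hF
  rw [hvar]
  have : (C/2) * ((1/2) * S) = K / 2 := by rw [hKdef]; ring
  rw [this]
  linarith
end
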